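/- Let A ⊆ B be rings (so that the inclusion A → B is injective). Then for every prime ideal q of A there exist a prime ideal p of B and a valuation subring R of the residue field k(p) with maximal ideal m, such that: the composite homomorphism Φ : A → B → k(p) has image contained in R; the canonical map B ⊗_A R → k(p) is surjective (i.e., the corresponding A-valuation on B is unbounded); and Φ⁻¹(m) = q. In other words, the map τ : Val(B,A) → Spec A sending an unbounded A-valuation (p, R, Φ) to Φ⁻¹(m) is surjective. -/

import Mathlib

open IsLocalRing
set_option maxHeartbeats 1600000

namespace Stmt11Aux

variable {B K : Type*} [CommRing B] [Field K] (Φ : B →+* K) (V : ValuationSubring K)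

/-- The "composite" prime: elements whose image is topologically nilpotent against all of B. -/
def P2 : Ideal B where
  carrier := {b | ∀ d : B, V.valuation (Φ b * Φ d) < 1}
  add_mem' := by
    intro x y hx hy d
    have hre : Φ (x + y) * Φ d = Φ x * Φ d + Φ y * Φ d := by rw [map_add]; ring
    simp only [Set.mem_setOf_eq] at *
    rw [hre]
    exact lt_of_le_of_lt (V.valuation.map_add _ _) (max_lt (hx d) (hy d))
  zero_mem' := by
    intro d
    simp only [Set.mem_setOf_eq, map_zero, zero_mul]
    exact zero_lt_one
  smul_mem' := by
    intro c x hx d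
    simp only [Set.mem_setOf_eq] at *
    have hre : Φ (c • x) * Φ d = Φ x * Φ (c * d) := by
      rw [smul_eq_mul, map_mul, map_mul]; ring
    rw [hre]
    exact hx (c * d)

lemma mem_P2 (b : B) : b ∈ P2 Φ V ↔ ∀ d : B, V.valuation (Φ b * Φ d) < 1 := Iff.rfl

lemma P2_isPrime : (P2 Φ V).IsPrime := by
  constructor
  · intro h
    have h1 : (1 : B) ∈ P2 Φ V := h ▸ Submodule.mem_top
    have := (mem_P2 Φ V 1).mp h1 1
    rw [map_one, one_mul, map_one] at this
    exact lt_irrefl 1 this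
  · intro x y hxy
    rw [or_iff_not_imp_left]
    intro hx
    rw [mem_P2] at hx
    push_neg at hx
    obtain ⟨d0, hd0⟩ := hx
    intro d
    have key := (mem_P2 Φ V _).mp hxy (d0 * d)
    have hre : Φ (x * y) * Φ (d0 * d) = (Φ x * Φ d0) * (Φ y * Φ d) := by
      rw [map_mul, map_mul]; ring
    rw [hre, V.valuation.map_mul] at key
    exact lt_of_le_of_lt (le_mul_of_one_le_left' hd0) key

/-- The subring generated by the image of `B` and the valuation ring `V`. -/
def W : ValuationSubring K :=
  ValuationSubring.ofSubring
    { carrier := {x | ∃ b : B, Φ b ≠ 0 ∧ V.valuation x ≤ V.valuation (Φ b)}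
      one_mem' := ⟨1, by simp, by simp⟩
      mul_mem' := by
        rintro x y ⟨b, hb, hxb⟩ ⟨c, hc, hyc⟩
        exact ⟨b * c, by simp [hb, hc], by
          rw [map_mul, map_mul, map_mul]; exact mul_le_mul' hxb hyc⟩
      add_mem' := by
        rintro x y ⟨b, hb, hxb⟩ ⟨c, hc, hyc⟩
        rcases le_total (V.valuation (Φ b)) (V.valuation (Φ c)) with h | h
        · exact ⟨c, hc, le_trans (V.valuation.map_add x y) (max_le (hxb.trans h) hyc)⟩
        · exact ⟨b, hb, le_trans (V.valuation.map_add x y) (max_le hxb (hyc.trans h))⟩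
      zero_mem' := ⟨1, by simp, by simp⟩
      neg_mem' := by
        rintro x ⟨b, hb, hxb⟩
        exact ⟨b, hb, by rwa [V.valuation.map_neg]⟩ }
    (by
      intro x
      rcases le_or_gt (V.valuation x) 1 with h | h
      · exact Or.inl ⟨1, by simp, by simpa using h⟩
      · refine Or.inr ⟨1, by simp, ?_⟩
        have hx0 : x ≠ 0 := by
          intro e
          rw [e, map_zero] at h
          exact absurd h (not_lt.mpr zero_le')
        have hv0 : V.valuation x ≠ 0 := by simpa using hx0
        rw [map_inv₀, map_one, V.valuation.map_one]
        have := mul_le_mul_right h.le (V.valuation x)⁻¹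
        rwa [inv_mul_cancel₀ hv0, mul_one] at this)

lemma mem_W (x : K) :
    x ∈ W Φ V ↔ ∃ b : B, Φ b ≠ 0 ∧ V.valuation x ≤ V.valuation (Φ b) := Iff.rfl

lemma Phi_mem_W (b : B) : Φ b ∈ W Φ V := by
  by_cases hb : Φ b = 0
  · rw [hb]; exact zero_mem _
  · exact ⟨b, hb, le_rfl⟩

lemma V_le_W {x : K} (hx : x ∈ V) : x ∈ W Φ V :=
  ⟨1, by simp, by rw [map_one, V.valuation.map_one]; exact (V.valuation_le_one_iff x).mpr hx⟩

lemma mem_maximalIdeal_W (y : W Φ V) :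
    y ∈ maximalIdeal (W Φ V) ↔ ∀ d : B, V.valuation ((y : K) * Φ d) < 1 := by
  rw [mem_maximalIdeal, mem_nonunits_iff]
  constructor
  · intro hy
    by_contra hc
    push_neg at hc
    obtain ⟨d, hd⟩ := hc
    apply hy
    have hy0 : (y : K) ≠ 0 := by
      intro e
      rw [e, zero_mul, map_zero] at hd
      exact absurd hd (not_le.mpr zero_lt_one)
    have hv0 : V.valuation (y : K) ≠ 0 := by simpa using hy0
    have hΦd : Φ d ≠ 0 := by
      intro e
      rw [e, mul_zero, map_zero] at hd
      exact absurd hd (not_le.mpr zero_lt_one)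
    have hyinv : ((y : K))⁻¹ ∈ W Φ V := by
      refine ⟨d, hΦd, ?_⟩
      rw [map_inv₀]
      rw [V.valuation.map_mul] at hd
      have := mul_le_mul_right hd (V.valuation (y : K))⁻¹
      rwa [mul_one, ← mul_assoc, inv_mul_cancel₀ hv0, one_mul] at this
    exact isUnit_iff_exists_inv.mpr ⟨⟨_, hyinv⟩, Subtype.ext (mul_inv_cancel₀ hy0)⟩
  · intro hy hun
    obtain ⟨z, hz⟩ := isUnit_iff_exists_inv.mp hun
    obtain ⟨b, hb, hzb⟩ := z.2
    have h1 : (y : K) * (z : K) = 1 := by exact_mod_cast congrArg Subtype.val hz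
    have h2 : V.valuation (y : K) * V.valuation (z : K) = 1 := by
      rw [← V.valuation.map_mul, h1, V.valuation.map_one]
    have h3 : (1 : V.ValueGroup) ≤ V.valuation ((y : K) * Φ b) := by
      rw [V.valuation.map_mul]
      calc (1 : V.ValueGroup) = V.valuation (y : K) * V.valuation (z : K) := h2.symm
        _ ≤ V.valuation (y : K) * V.valuation (Φ b) := mul_le_mul_right hzb _
    exact absurd (hy b) (not_lt.mpr h3)

/-- The image of `V` in the residue field of `W`. -/
noncomputable def Vbar : ValuationSubring (ResidueField (W Φ V)) :=
  ValuationSubring.ofSubring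
    { carrier := {x | ∃ y : W Φ V, (y : K) ∈ V ∧ residue _ y = x}
      one_mem' := ⟨1, by simpa using one_mem V, map_one _⟩
      mul_mem' := by
        rintro x1 x2 ⟨y1, h1, e1⟩ ⟨y2, h2, e2⟩
        exact ⟨y1 * y2, by push_cast; exact mul_mem h1 h2, by rw [map_mul, e1, e2]⟩
      add_mem' := by
        rintro x1 x2 ⟨y1, h1, e1⟩ ⟨y2, h2, e2⟩
        exact ⟨y1 + y2, by push_cast; exact add_mem h1 h2, by rw [map_add, e1, e2]⟩
      zero_mem' := ⟨0, by simpa using zero_mem V, map_zero _⟩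
      neg_mem' := by
        rintro x ⟨y, h, e⟩
        exact ⟨-y, by push_cast; exact neg_mem h, by rw [map_neg, e]⟩ }
    (by
      intro x
      obtain ⟨y, rfl⟩ := residue_surjective x
      rcases le_or_gt (V.valuation (y : K)) 1 with h | h
      · exact Or.inl ⟨y, V.mem_of_valuation_le_one _ h, rfl⟩
      · right
        have hyunit : IsUnit y := by
          by_contra hy
          have := (mem_maximalIdeal_W Φ V y).mp (by rwa [mem_maximalIdeal, mem_nonunits_iff]) 1
          rw [map_one, mul_one] at this
          exact absurd this (not_lt.mpr h.le)
        obtain ⟨z, hz⟩ := isUnit_iff_exists_inv.mp hyunit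
        have h1 : (y : K) * (z : K) = 1 := by exact_mod_cast congrArg Subtype.val hz
        have hvy0 : V.valuation (y : K) ≠ 0 := by
          intro e
          rw [e] at h
          exact absurd h (not_lt.mpr zero_le')
        have hvz : V.valuation (z : K) ≤ 1 := by
          have h2 : V.valuation (y : K) * V.valuation (z : K) = 1 := by
            rw [← V.valuation.map_mul, h1, V.valuation.map_one]
          have h3 := mul_le_mul_right h.le (V.valuation (z : K))
          rwa [mul_one, mul_comm, h2] at h3
        have hmul : residue (W Φ V) y * residue (W Φ V) z = 1 := by
          rw [← map_mul, hz, map_one]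
        exact ⟨z, V.mem_of_valuation_le_one _ hvz, eq_inv_of_mul_eq_one_right hmul⟩)

lemma mem_Vbar (x : ResidueField (W Φ V)) :
    x ∈ Vbar Φ V ↔ ∃ y : W Φ V, (y : K) ∈ V ∧ residue _ y = x := Iff.rfl

/-- Pull back a valuation subring along a field embedding. -/
noncomputable def Rcomap {K2 : Type*} [Field K2] (ι : K2 →+* ResidueField (W Φ V)) : ValuationSubring K2 :=
  ValuationSubring.ofSubring ((Vbar Φ V).toSubring.comap ι)
    (by
      intro x
      rcases (Vbar Φ V).mem_or_inv_mem (ι x) with h | h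
      · exact Or.inl h
      · right
        rw [Subring.mem_comap, map_inv₀]
        exact h)

lemma mem_Rcomap {K2 : Type*} [Field K2] (ι : K2 →+* ResidueField (W Φ V)) (x : K2) :
    x ∈ Rcomap Φ V ι ↔ ι x ∈ Vbar Φ V := Iff.rfl

end Stmt11Aux

open Stmt11Aux

/-- for `A ⊆ B` (so `Spec B → Spec A` is schematically dominant) the map
`τ : Val(B,A) → Spec A` is surjective: for every prime `q` of `A` there are a prime `p`
of `B` and a valuation subring `R` of the residue field `k(p)` such that the composite
`Φ : A → B → k(p)` lands in `R`, the canonical map `B ⊗_A R → k(p)` is surjective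
(i.e. the corresponding `A`-valuation on `B` is unbounded), and `Φ⁻¹(m_R) = q`.
Here `k(p)` is realized as the residue field of the localization `B_p`. -/
theorem stmt11 {B : Type*} [CommRing B] (A : Subring B) (q : Ideal A) (hq : q.IsPrime) :
    ∃ (p : PrimeSpectrum B)
      (R : ValuationSubring (IsLocalRing.ResidueField (Localization.AtPrime p.asIdeal))),
      (∀ a : A, ((IsLocalRing.residue (Localization.AtPrime p.asIdeal)).comp
          (algebraMap B (Localization.AtPrime p.asIdeal))) (a : B) ∈ R) ∧
      (∀ x : IsLocalRing.ResidueField (Localization.AtPrime p.asIdeal),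
        ∃ (m : ℕ) (c : Fin m → B)
          (r : Fin m → IsLocalRing.ResidueField (Localization.AtPrime p.asIdeal)),
          (∀ i, r i ∈ R) ∧
          x = ∑ i, ((IsLocalRing.residue (Localization.AtPrime p.asIdeal)).comp
            (algebraMap B (Localization.AtPrime p.asIdeal))) (c i) * r i) ∧
      (∀ (a : A) (ha : ((IsLocalRing.residue (Localization.AtPrime p.asIdeal)).comp
          (algebraMap B (Localization.AtPrime p.asIdeal))) (a : B) ∈ R),
        (a ∈ q ↔ (⟨_, ha⟩ : R) ∈ IsLocalRing.maximalIdeal R)) := by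
  classical
  haveI := hq
  -- step 1: a prime of B disjoint from A \ q
  obtain ⟨p0, hp0prime, -, hp0disj⟩ := Ideal.exists_le_prime_disjoint (⊥ : Ideal B)
    (q.primeCompl.map A.subtype.toMonoidHom)
    (by
      rw [Set.disjoint_left]
      rintro x hx ⟨a, ha, rfl⟩
      simp only [SetLike.mem_coe, Ideal.mem_bot] at hx
      have : a = 0 := by ext; simpa using hx
      exact ha (this ▸ q.zero_mem))
  haveI := hp0prime
  have hdisj : ∀ a : A, a ∉ q → (a : B) ∉ p0 := fun a ha hp =>
    Set.disjoint_left.mp hp0disj hp ⟨a, ha, rfl⟩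
  set K := ResidueField (Localization.AtPrime p0) with hK
  set Φ : B →+* K := (residue _).comp (algebraMap B (Localization.AtPrime p0)) with hΦ
  have F1 : ∀ b : B, Φ b = 0 ↔ b ∈ p0 := by
    intro b
    rw [hΦ, RingHom.comp_apply, IsLocalRing.residue_eq_zero_iff]
    exact IsLocalization.AtPrime.to_map_mem_maximal_iff _ p0 b
  have hu : ∀ s : q.primeCompl, IsUnit ((Φ.comp A.subtype) s) := by
    intro s
    refine isUnit_iff_ne_zero.mpr ?_
    simp only [RingHom.comp_apply]
    rw [Ne, F1]
    exact hdisj s s.2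
  set f : Localization.AtPrime q →+* K := IsLocalization.lift hu with hf
  obtain ⟨V, hV, hVloc⟩ := IsLocalRing.exists_factor_valuationRing f
  have hfa : ∀ a : A, f (algebraMap A (Localization.AtPrime q) a) = Φ a := fun a =>
    IsLocalization.lift_eq hu a
  have D1 : ∀ a : A, Φ a ∈ V := fun a => hfa a ▸ hV _
  have D2 : ∀ a : A, a ∈ q → V.valuation (Φ a) < 1 := by
    intro a ha
    have hnu : ¬ IsUnit (algebraMap A (Localization.AtPrime q) a) := by
      rw [IsLocalization.AtPrime.isUnit_to_map_iff (Localization.AtPrime q) q]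
      exact fun h => h ha
    have hnu2 : ¬ IsUnit
        (f.codRestrict V.toSubring hV (algebraMap A (Localization.AtPrime q) a)) :=
      fun h => hnu (hVloc.1 _ h)
    have hmax : (⟨Φ a, D1 a⟩ : V) ∈ maximalIdeal V := by
      rw [mem_maximalIdeal, mem_nonunits_iff]
      convert hnu2 using 2
      ext
      exact (hfa a).symm
    rwa [V.valuation_lt_one_iff] at hmax
  have D3 : ∀ a : A, a ∉ q → (Φ a : K)⁻¹ ∈ V := by
    intro a ha
    have h1 : f (IsLocalization.mk' (Localization.AtPrime q) 1
        (⟨a, ha⟩ : q.primeCompl)) * Φ a = 1 := by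
      rw [← hfa a, ← map_mul, IsLocalization.mk'_spec]; simp
    have heq : f (IsLocalization.mk' (Localization.AtPrime q) 1
        (⟨a, ha⟩ : q.primeCompl)) = (Φ a)⁻¹ :=
      eq_inv_of_mul_eq_one_left h1
    exact heq ▸ hV _
  have vne : ∀ x : K, x ≠ 0 → V.valuation x ≠ 0 := by
    intro x hx
    simpa using hx
  have D3' : ∀ a : A, a ∉ q → 1 ≤ V.valuation (Φ a) := by
    intro a ha
    have hΦa : Φ (a : B) ≠ 0 := by rw [Ne, F1]; exact hdisj a ha
    have h1 : V.valuation ((Φ (a : B) : K)⁻¹) ≤ 1 := by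
      rw [V.valuation_le_one_iff]; exact D3 a ha
    rw [map_inv₀] at h1
    have := mul_le_mul_left h1 (V.valuation (Φ (a : B)))
    rwa [inv_mul_cancel₀ (vne _ hΦa), one_mul] at this
  -- the composite prime p2 and target data
  set p2 : Ideal B := P2 Φ V with hp2def
  have hp2prime : p2.IsPrime := P2_isPrime Φ V
  haveI := hp2prime
  have hp2A : ∀ a : A, (a : B) ∈ p2 → a ∈ q := by
    intro a ha
    by_contra haq
    have := (mem_P2 Φ V (a : B)).mp ha 1
    rw [map_one, mul_one] at this
    exact absurd (D3' a haq) (not_le.mpr this)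
  set g : B →+* W Φ V := Φ.codRestrict (W Φ V) (Phi_mem_W Φ V) with hg
  set πg : B →+* ResidueField (W Φ V) := (residue _).comp g with hπg
  have hπg0 : ∀ b : B, πg b = 0 ↔ b ∈ p2 := by
    intro b
    rw [hπg, RingHom.comp_apply, residue_eq_zero_iff, mem_maximalIdeal_W Φ V (g b)]
    exact (mem_P2 Φ V b).symm
  have hu2 : ∀ s : p2.primeCompl, IsUnit (πg s) := fun s =>
    isUnit_iff_ne_zero.mpr (fun e => s.2 ((hπg0 s).mp e))
  set ι0 : Localization.AtPrime p2 →+* ResidueField (W Φ V) := IsLocalization.lift hu2 with hι0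
  have hι0a : ∀ b : B, ι0 (algebraMap B (Localization.AtPrime p2) b) = πg b := fun b =>
    IsLocalization.lift_eq hu2 b
  have hkill : ∀ z ∈ maximalIdeal (Localization.AtPrime p2), ι0 z = 0 := by
    intro z hz
    obtain ⟨⟨b, s⟩, hbs⟩ := IsLocalization.mk'_surjective p2.primeCompl z
    have hb : b ∈ p2 := by
      rw [← hbs, IsLocalization.AtPrime.mk'_mem_maximal_iff _ p2] at hz
      exact hz
    have hspec : z * algebraMap B (Localization.AtPrime p2) (s : B) =
        algebraMap B (Localization.AtPrime p2) b := by
      rw [← hbs]; exact IsLocalization.mk'_spec _ b s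
    have h4 : ι0 z * πg (s : B) = πg b := by
      rw [← hι0a, ← hι0a, ← map_mul, hspec]
    rw [(hπg0 b).mpr hb] at h4
    rcases mul_eq_zero.mp h4 with h | h
    · exact h
    · exact absurd h (hu2 s).ne_zero
  set ι : ResidueField (Localization.AtPrime p2) →+* ResidueField (W Φ V) :=
    Ideal.Quotient.lift (maximalIdeal (Localization.AtPrime p2)) ι0 hkill with hιdef
  set Φ2 : B →+* ResidueField (Localization.AtPrime p2) :=
    (residue (Localization.AtPrime p2)).comp (algebraMap B (Localization.AtPrime p2)) with hΦ2
  have hι : ∀ b : B, ι (Φ2 b) = πg b := by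
    intro b
    rw [hΦ2, RingHom.comp_apply]
    exact (Ideal.Quotient.lift_mk _ _ _).trans (hι0a b)
  have F12 : ∀ b : B, Φ2 b = 0 ↔ b ∈ p2 := by
    intro b
    rw [hΦ2, RingHom.comp_apply, IsLocalRing.residue_eq_zero_iff]
    exact IsLocalization.AtPrime.to_map_mem_maximal_iff _ p2 b
  set R : ValuationSubring (ResidueField (Localization.AtPrime p2)) := Rcomap Φ V ι with hR
  -- Goal 1
  have G1 : ∀ a : A, Φ2 (a : B) ∈ R := by
    intro a
    rw [hR, mem_Rcomap, hι]
    exact ⟨g (a : B), D1 a, rfl⟩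
  -- Goal 2
  have G2 : ∀ x : ResidueField (Localization.AtPrime p2),
      ∃ (m : ℕ) (c : Fin m → B) (r : Fin m → ResidueField (Localization.AtPrime p2)),
        (∀ i, r i ∈ R) ∧ x = ∑ i, Φ2 (c i) * r i := by
    intro x
    obtain ⟨z, rfl⟩ := residue_surjective x
    obtain ⟨⟨b0, s⟩, hbs⟩ := IsLocalization.mk'_surjective p2.primeCompl z
    have hrep : residue (Localization.AtPrime p2) z * Φ2 (s : B) = Φ2 b0 := by
      rw [hΦ2, RingHom.comp_apply, RingHom.comp_apply, ← map_mul, ← hbs]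
      congr 1
      exact IsLocalization.mk'_spec _ b0 s
    have hs : (s : B) ∉ p2 := s.2
    rw [mem_P2] at hs
    push_neg at hs
    obtain ⟨d0, hd0⟩ := hs
    have hd0' : 1 ≤ V.valuation (Φ ((s : B) * d0)) := by rw [map_mul]; exact hd0
    have hsd0 : (s : B) * d0 ∉ p2 := by
      intro h
      have := (mem_P2 Φ V _).mp h 1
      rw [map_one, mul_one] at this
      exact absurd hd0' (not_le.mpr this)
    have hne2 : Φ2 ((s : B) * d0) ≠ 0 := by rw [Ne, F12]; exact hsd0
    have hΦsd0 : Φ ((s : B) * d0) ≠ 0 := by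
      intro e
      rw [e, map_zero] at hd0'
      exact absurd hd0' (not_le.mpr zero_lt_one)
    set r0 : ResidueField (Localization.AtPrime p2) := (Φ2 ((s : B) * d0))⁻¹ with hr0
    have hyV : (Φ ((s : B) * d0) : K)⁻¹ ∈ V := by
      apply V.mem_of_valuation_le_one
      rw [map_inv₀]
      have := mul_le_mul_right hd0' (V.valuation (Φ ((s : B) * d0)))⁻¹
      rwa [mul_one, inv_mul_cancel₀ (vne _ hΦsd0)] at this
    have hr0R : r0 ∈ R := by
      rw [hr0, hR, mem_Rcomap, map_inv₀, hι]
      have hyW : ((Φ ((s : B) * d0) : K))⁻¹ ∈ W Φ V := V_le_W Φ V hyV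
      have hprod : g ((s : B) * d0) * (⟨_, hyW⟩ : W Φ V) = 1 :=
        Subtype.ext (mul_inv_cancel₀ hΦsd0)
      have hmul : πg ((s : B) * d0) * residue (W Φ V) ⟨_, hyW⟩ = 1 := by
        rw [hπg, RingHom.comp_apply, ← map_mul, hprod, map_one]
      exact ⟨_, hyV, eq_inv_of_mul_eq_one_right hmul⟩
    refine ⟨1, fun _ => b0 * d0, fun _ => r0, fun _ => hr0R, ?_⟩
    rw [Fin.sum_univ_one]
    have h1 : Φ2 (s : B) * Φ2 d0 * r0 = 1 := by
      rw [hr0, ← map_mul]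
      exact mul_inv_cancel₀ hne2
    calc residue (Localization.AtPrime p2) z
        = residue (Localization.AtPrime p2) z * (Φ2 (s : B) * Φ2 d0 * r0) := by
          rw [h1, mul_one]
      _ = (residue (Localization.AtPrime p2) z * Φ2 (s : B)) * Φ2 d0 * r0 := by ring
      _ = Φ2 b0 * Φ2 d0 * r0 := by rw [hrep]
      _ = Φ2 (b0 * d0) * r0 := by rw [map_mul]
  -- Goal 3
  have G3 : ∀ (a : A) (ha : Φ2 (a : B) ∈ R),
      (a ∈ q ↔ (⟨Φ2 (a : B), ha⟩ : R) ∈ maximalIdeal R) := by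
    intro a ha
    rw [mem_maximalIdeal, mem_nonunits_iff]
    constructor
    · intro haq hun
      obtain ⟨z, hz⟩ := isUnit_iff_exists_inv.mp hun
      have hz1 : Φ2 (a : B) * (z : ResidueField (Localization.AtPrime p2)) = 1 := by
        simpa using congrArg Subtype.val hz
      have hz2 : πg (a : B) * ι (z : ResidueField (Localization.AtPrime p2)) = 1 := by
        rw [← hι, ← map_mul, hz1, map_one]
      obtain ⟨y, hyV, hyπ⟩ := (mem_Rcomap Φ V ι _).mp z.2
      rw [← hyπ] at hz2
      have h0 : residue (W Φ V) (g (a : B) * y - 1) = 0 := by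
        rw [map_sub, map_mul, map_one, sub_eq_zero]
        exact hz2
      rw [residue_eq_zero_iff] at h0
      have h1 := (mem_maximalIdeal_W Φ V _).mp h0 1
      rw [map_one, mul_one] at h1
      have hcoe : ((g (a : B) * y - 1 : W Φ V) : K) = Φ (a : B) * (y : K) - 1 := by
        push_cast
        rfl
      rw [hcoe] at h1
      have h2 : V.valuation (Φ (a : B) * (y : K)) < 1 := by
        rw [V.valuation.map_mul]
        calc V.valuation (Φ (a : B)) * V.valuation (y : K)
            ≤ V.valuation (Φ (a : B)) * 1 :=
              mul_le_mul_right ((V.valuation_le_one_iff _).mpr hyV) _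
          _ < 1 := by rw [mul_one]; exact D2 a haq
      have h3 : V.valuation (Φ (a : B) * (y : K) - 1) = 1 := by
        rw [V.valuation.map_sub_swap]
        exact V.valuation.map_one_sub_of_lt h2
      rw [h3] at h1
      exact lt_irrefl 1 h1
    · intro hnu
      by_contra haq
      have hap2 : (a : B) ∉ p2 := fun h => haq (hp2A a h)
      have hΦ2a : Φ2 (a : B) ≠ 0 := by rw [Ne, F12]; exact hap2
      have hΦa : Φ (a : B) ≠ 0 := by rw [Ne, F1]; exact hdisj a haq
      have hinvR : (Φ2 (a : B))⁻¹ ∈ R := by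
        rw [hR, mem_Rcomap, map_inv₀, hι]
        have hyW : ((Φ (a : B) : K))⁻¹ ∈ W Φ V := V_le_W Φ V (D3 a haq)
        have hprod : g (a : B) * (⟨_, hyW⟩ : W Φ V) = 1 :=
          Subtype.ext (mul_inv_cancel₀ hΦa)
        have hmul : πg (a : B) * residue (W Φ V) ⟨_, hyW⟩ = 1 := by
          rw [hπg, RingHom.comp_apply, ← map_mul, hprod, map_one]
        exact ⟨_, D3 a haq, eq_inv_of_mul_eq_one_right hmul⟩
      exact hnu (isUnit_iff_exists_inv.mpr
        ⟨⟨_, hinvR⟩, Subtype.ext (mul_inv_cancel₀ hΦ2a)⟩)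
  exact ⟨⟨p2, hp2prime⟩, R, G1, G2, G3⟩
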